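/- Upper bound lemma: let 𝒢 be a finite abelian group with uniform measure U, and let μ be a probability measure on 𝒢. Then for every n ≥ 1, ‖μ^{*n} − U‖_{TV} ≤ (1/2)(Σ_{ξ ∈ Ĝ, ξ ≠ 0} |μ̂(ξ)|^{2n})^{1/2}. -/

import Mathlib

/-- Convolution of two functions on a finite abelian group. -/
def groupConv {G : Type*} [AddCommGroup G] [Fintype G] (f g : G → ℝ) : G → ℝ :=
  fun x => ∑ y, f y * g (x - y)

/-- `n`-fold convolution power of a measure `μ` on a finite abelian group. -/
def convPow {G : Type*} [AddCommGroup G] [Fintype G] [DecidableEq G]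
    (μ : G → ℝ) : ℕ → G → ℝ
  | 0 => fun x => if x = 0 then 1 else 0
  | n + 1 => groupConv μ (convPow μ n)

/-- The Fourier coefficient of `μ` at a character `ξ : G →+ ℝ/ℤ`:
`μ̂(ξ) = Σ_g μ(g) e(ξ(g))`. -/
noncomputable def fourierCoeff' {G : Type*} [AddCommGroup G] [Fintype G]
    (μ : G → ℝ) (ξ : G →+ AddCircle (1 : ℝ)) : ℂ :=
  ∑ g, (μ g : ℂ) * (AddCircle.toCircle (ξ g) : ℂ)

open Finset Complex

namespace Stmt10Aux

variable {G : Type*} [AddCommGroup G] [Fintype G]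

set_option linter.unusedSectionVars false

/-- The complex character associated to `ξ : G →+ AddCircle 1`. -/
noncomputable def E (ξ : G →+ AddCircle (1 : ℝ)) : AddChar G ℂ where
  toFun g := (AddCircle.toCircle (ξ g) : ℂ)
  map_zero_eq_one' := by simp
  map_add_eq_mul' a b := by simp [map_add, AddCircle.toCircle_add]

lemma E_apply (ξ : G →+ AddCircle (1 : ℝ)) (g : G) :
    E ξ g = (AddCircle.toCircle (ξ g) : ℂ) := rfl

lemma E_injective : Function.Injective (E (G := G)) := by
  intro ξ η h
  ext g
  have h1 : (E ξ) g = (E η) g := by rw [h]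
  rw [E_apply, E_apply] at h1
  exact AddCircle.injective_toCircle one_ne_zero (Subtype.coe_injective h1)

lemma E_surjective : Function.Surjective (E (G := G)) := by
  intro ψ
  have hc : ∀ g, ψ g ∈ Metric.sphere (0:ℂ) 1 := fun g =>
    mem_sphere_zero_iff_norm.2 (ψ.norm_apply g)
  let c : G → Circle := fun g => ⟨ψ g, hc g⟩
  have hcoe : ∀ g, ((c g : Circle) : ℂ) = ψ g := fun _ => rfl
  let t : AddCircle (1:ℝ) ≃ Circle := (AddCircle.homeomorphCircle one_ne_zero).toEquiv
  have ht : ∀ x : AddCircle (1:ℝ), t x = AddCircle.toCircle x := fun x =>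
    AddCircle.homeomorphCircle_apply one_ne_zero x
  have htc : ∀ y : Circle, AddCircle.toCircle (t.symm y) = y := fun y => by
    rw [← ht, Equiv.apply_symm_apply]
  refine ⟨{ toFun := fun g => t.symm (c g), map_zero' := ?_, map_add' := ?_ }, ?_⟩
  · apply AddCircle.injective_toCircle (one_ne_zero (α := ℝ))
    rw [htc, AddCircle.toCircle_zero]
    apply Subtype.coe_injective
    show ((c 0 : Circle) : ℂ) = ((1 : Circle) : ℂ)
    rw [hcoe, ψ.map_zero_eq_one, Circle.coe_one]
  · intro a b
    apply AddCircle.injective_toCircle (one_ne_zero (α := ℝ))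
    rw [htc, AddCircle.toCircle_add, htc, htc]
    apply Subtype.coe_injective
    push_cast
    exact ψ.map_add_eq_mul a b
  · ext g
    rw [E_apply]
    show (AddCircle.toCircle (t.symm (c g)) : ℂ) = ψ g
    rw [htc, hcoe]

lemma E_zero : E (0 : G →+ AddCircle (1:ℝ)) = 0 := by
  ext g
  rw [E_apply]
  simp

lemma E_ne_zero {ξ : G →+ AddCircle (1:ℝ)} (h : ξ ≠ 0) : E ξ ≠ 0 := fun he =>
  h (E_injective (he.trans E_zero.symm))

/-- Fourier coefficient at a complex character. -/
noncomputable def F (a : G → ℝ) (ψ : AddChar G ℂ) : ℂ := ∑ g, (a g : ℂ) * ψ g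

lemma F_E (a : G → ℝ) (ξ : G →+ AddCircle (1:ℝ)) : F a (E ξ) = fourierCoeff' a ξ := rfl

lemma F_conv (a b : G → ℝ) (ψ : AddChar G ℂ) :
    F (groupConv a b) ψ = F a ψ * F b ψ := by
  unfold F groupConv
  calc ∑ x, ((∑ y, a y * b (x - y) : ℝ) : ℂ) * ψ x
      = ∑ x, ∑ y, (a y : ℂ) * (b (x - y) : ℂ) * ψ x := by
        refine Finset.sum_congr rfl fun x _ => ?_
        push_cast
        rw [Finset.sum_mul]
    _ = ∑ y, ∑ x, (a y : ℂ) * (b (x - y) : ℂ) * ψ x := Finset.sum_comm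
    _ = ∑ y, ((a y : ℂ) * ψ y) * ∑ z, (b z : ℂ) * ψ z := by
        refine Finset.sum_congr rfl fun y _ => ?_
        rw [Finset.mul_sum, ← Equiv.sum_comp (Equiv.addRight y)
          (fun x => (a y : ℂ) * (b (x - y) : ℂ) * ψ x)]
        refine Finset.sum_congr rfl fun z _ => ?_
        simp only [Equiv.coe_addRight, add_sub_cancel_right, AddChar.map_add_eq_mul]
        ring
    _ = (∑ y, (a y : ℂ) * ψ y) * ∑ z, (b z : ℂ) * ψ z := by rw [← Finset.sum_mul]

lemma F_convPow [DecidableEq G] (μ : G → ℝ) (n : ℕ) (ψ : AddChar G ℂ) :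
    F (convPow μ n) ψ = (F μ ψ) ^ n := by
  induction n with
  | zero =>
      show F (fun x => if x = 0 then (1:ℝ) else 0) ψ = 1
      unfold F
      rw [Finset.sum_eq_single 0]
      · simp
      · intro g _ hg; simp [hg]
      · simp
  | succ m ih =>
      show F (groupConv μ (convPow μ m)) ψ = _
      rw [F_conv, ih, pow_succ]
      ring

lemma parseval [DecidableEq G] (a : G → ℝ) :
    ∑ ψ : AddChar G ℂ, F a ψ * (starRingEnd ℂ) (F a ψ)
      = (Fintype.card G : ℂ) * ∑ x, (a x : ℂ) ^ 2 := by
  have hconj : ∀ ψ : AddChar G ℂ, (starRingEnd ℂ) (F a ψ) = ∑ y, (a y : ℂ) * ψ (-y) := by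
    intro ψ
    rw [F, map_sum]
    refine Finset.sum_congr rfl fun y _ => ?_
    rw [map_mul, Complex.conj_ofReal, AddChar.map_neg_eq_conj]
  calc ∑ ψ : AddChar G ℂ, F a ψ * (starRingEnd ℂ) (F a ψ)
      = ∑ ψ : AddChar G ℂ, ∑ x, ∑ y, (a x : ℂ) * (a y : ℂ) * ψ (x - y) := by
        refine Finset.sum_congr rfl fun ψ _ => ?_
        rw [hconj, F, Finset.sum_mul_sum]
        refine Finset.sum_congr rfl fun x _ => Finset.sum_congr rfl fun y _ => ?_
        rw [sub_eq_add_neg, AddChar.map_add_eq_mul]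
        ring
    _ = ∑ x, ∑ y, (a x : ℂ) * (a y : ℂ) * ∑ ψ : AddChar G ℂ, ψ (x - y) := by
        rw [Finset.sum_comm]
        refine Finset.sum_congr rfl fun x _ => ?_
        rw [Finset.sum_comm]
        refine Finset.sum_congr rfl fun y _ => ?_
        rw [← Finset.mul_sum]
    _ = ∑ x, (a x : ℂ) ^ 2 * (Fintype.card G : ℂ) := by
        refine Finset.sum_congr rfl fun x _ => ?_
        rw [Finset.sum_eq_single x]
        · rw [AddChar.sum_apply_eq_ite, if_pos (sub_self x)]
          ring
        · intro y _ hy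
          rw [AddChar.sum_apply_eq_ite, if_neg (sub_ne_zero.2 (Ne.symm hy)), mul_zero]
        · simp
    _ = (Fintype.card G : ℂ) * ∑ x, (a x : ℂ) ^ 2 := by
        rw [← Finset.sum_mul]
        ring

end Stmt10Aux

/-- Upper bound lemma: for a probability measure `μ` on a finite abelian group `G`,
`‖μ^{*n} − U‖_TV ≤ (1/2)(Σ_{ξ≠0} |μ̂(ξ)|^{2n})^{1/2}`, the sum being over all nontrivial
characters of `G` (collected in the finset `D`). -/
theorem stmt_10 {G : Type*} [AddCommGroup G] [Fintype G] [DecidableEq G]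
    (μ : G → ℝ) (hpos : ∀ g, 0 ≤ μ g) (hsum : ∑ g, μ g = 1)
    (n : ℕ) (hn : 1 ≤ n)
    (D : Finset (G →+ AddCircle (1 : ℝ)))
    (hD : ∀ ξ, ξ ∈ D ↔ ξ ≠ 0) :
    (1 / 2) * ∑ x, |convPow μ n x - (1 / Fintype.card G : ℝ)| ≤
      (1 / 2) * Real.sqrt (∑ ξ ∈ D, ‖fourierCoeff' μ ξ‖ ^ (2 * n)) := by
  classical
  have hNne : (Fintype.card G : ℂ) ≠ 0 := by
    exact_mod_cast Fintype.card_ne_zero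
  set f : G → ℝ := fun x => convPow μ n x - (1 / Fintype.card G : ℝ) with hfdef
  have hF0 : ∀ ψ : AddChar G ℂ, Stmt10Aux.F f ψ
      = (Stmt10Aux.F μ ψ) ^ n - (1 / Fintype.card G : ℂ) * ∑ g, ψ g := by
    intro ψ
    have h1 : Stmt10Aux.F f ψ = Stmt10Aux.F (convPow μ n) ψ
        - (1 / Fintype.card G : ℂ) * ∑ g, ψ g := by
      unfold Stmt10Aux.F
      rw [Finset.mul_sum, ← Finset.sum_sub_distrib]
      refine Finset.sum_congr rfl fun g _ => ?_
      simp only [hfdef]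
      push_cast
      ring
    rw [h1, Stmt10Aux.F_convPow]
  have hFμ0 : Stmt10Aux.F μ 0 = 1 := by
    unfold Stmt10Aux.F
    simp only [AddChar.zero_apply, mul_one]
    exact_mod_cast congrArg (Complex.ofReal) hsum
  have hFf0 : Stmt10Aux.F f 0 = 0 := by
    rw [hF0, hFμ0, one_pow]
    simp only [AddChar.zero_apply]
    rw [Finset.sum_const, Finset.card_univ, nsmul_eq_mul, mul_one, one_div,
      inv_mul_cancel₀ hNne, sub_self]
  have hFfD : ∀ ξ ∈ D, Stmt10Aux.F f (Stmt10Aux.E ξ) = (fourierCoeff' μ ξ) ^ n := by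
    intro ξ hξ
    rw [hF0, AddChar.sum_eq_zero_iff_ne_zero.2 (Stmt10Aux.E_ne_zero ((hD ξ).1 hξ)),
      mul_zero, sub_zero, Stmt10Aux.F_E]
  have key : (Fintype.card G : ℂ) * ∑ x, (f x : ℂ) ^ 2
      = ∑ ξ ∈ D, (‖fourierCoeff' μ ξ‖ : ℂ) ^ (2 * n) := by
    rw [← Stmt10Aux.parseval f,
      ← Finset.add_sum_erase _ _ (Finset.mem_univ (0 : AddChar G ℂ))]
    simp only [hFf0, map_zero, mul_zero, zero_add]
    refine (Finset.sum_bij (fun ξ (_ : ξ ∈ D) => Stmt10Aux.E ξ) ?_ ?_ ?_ ?_).symm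
    · intro ξ hξ
      exact Finset.mem_erase.2 ⟨Stmt10Aux.E_ne_zero ((hD ξ).1 hξ), Finset.mem_univ _⟩
    · intro ξ _ η _ h
      exact Stmt10Aux.E_injective h
    · intro ψ hψ
      obtain ⟨ξ, rfl⟩ := Stmt10Aux.E_surjective ψ
      refine ⟨ξ, (hD ξ).2 fun h0 => ?_, rfl⟩
      exact (Finset.mem_erase.1 hψ).1 (h0 ▸ Stmt10Aux.E_zero)
    · intro ξ hξ
      rw [hFfD ξ hξ, Complex.mul_conj, Complex.normSq_eq_norm_sq, norm_pow, ← pow_mul,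
        mul_comm n 2]
      push_cast
      ring
  have keyR : (Fintype.card G : ℝ) * ∑ x, f x ^ 2
      = ∑ ξ ∈ D, ‖fourierCoeff' μ ξ‖ ^ (2 * n) := by
    apply Complex.ofReal_injective
    push_cast
    exact key
  have hCS : (∑ x, |f x|) ^ 2 ≤ ∑ ξ ∈ D, ‖fourierCoeff' μ ξ‖ ^ (2 * n) := by
    have h := Finset.sum_mul_sq_le_sq_mul_sq Finset.univ (fun x => |f x|) (fun _ => (1:ℝ))
    simp only [mul_one, one_pow, sq_abs, Finset.sum_const, Finset.card_univ,
      nsmul_eq_mul] at h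
    calc (∑ x, |f x|) ^ 2 ≤ (∑ x, |f x| ^ 2) * (Fintype.card G : ℝ) := by simpa only [sq_abs] using h
      _ = (∑ x, f x ^ 2) * (Fintype.card G : ℝ) := by
          congr 1
          exact Finset.sum_congr rfl fun x _ => sq_abs _
      _ = ∑ ξ ∈ D, ‖fourierCoeff' μ ξ‖ ^ (2 * n) := by
          rw [mul_comm]; exact keyR
  have hfin : ∑ x, |f x| ≤ Real.sqrt (∑ ξ ∈ D, ‖fourierCoeff' μ ξ‖ ^ (2 * n)) := by
    have h1 : (0:ℝ) ≤ ∑ x, |f x| := Finset.sum_nonneg fun x _ => abs_nonneg _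
    rw [← Real.sqrt_sq h1]
    exact Real.sqrt_le_sqrt hCS
  have h2 : (0:ℝ) ≤ 1 / 2 := by norm_num
  exact mul_le_mul_of_nonneg_left hfin h2
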